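/- Fix natural numbers p, l1, l2, k1, k2. For every ε > 0 there exists Q such that for every finite field F with |F| ≥ Q and all matrices A1 ∈ F^{p×l1}, A2 ∈ F^{p×l2} satisfying k1 ≤ rank(A1), k2 ≤ rank(A2), and k1+k2 ≤ rank([A1 | A2]), the number of pairs (E1, E2) ∈ F^{l1×k1} × F^{l2×k2} with rank([A1·E1 | A2·E2]) = k1+k2 is at least (1 − ε) · |F|^{l1·k1 + l2·k2}. -/

import Mathlib

open Matrix

variable {F : Type} [Field F]

/-- `E ↦ E *ᵥ c` as a linear map in `E`. -/
def mvR (l k : ℕ) (c : Fin k → F) : Matrix (Fin l) (Fin k) F →ₗ[F] (Fin l → F) where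
  toFun E := E *ᵥ c
  map_add' E E' := Matrix.add_mulVec E E' c
  map_smul' a E := Matrix.smul_mulVec a E c

lemma mvR_surj {l k : ℕ} {c : Fin k → F} (hc : c ≠ 0) :
    Function.Surjective (mvR l k (F := F) c) := by
  obtain ⟨i, hi⟩ : ∃ i, c i ≠ 0 := by
    by_contra h; push_neg at h; exact hc (funext h)
  intro x
  refine ⟨Matrix.of fun j i' => if i' = i then x j * (c i)⁻¹ else 0, ?_⟩
  ext j
  simp only [mvR, LinearMap.coe_mk, AddHom.coe_mk, Matrix.mulVec, dotProduct, Matrix.of_apply]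
  rw [Finset.sum_eq_single i (fun b _ hb => by simp [hb]) (fun h => absurd (Finset.mem_univ i) h)]
  simp [hi]

lemma card_ker_eq {M N : Type} [Fintype F] [AddCommGroup M] [Module F M] [Finite M]
    [AddCommGroup N] [Module F N] (f : M →ₗ[F] N) :
    Nat.card (LinearMap.ker f) =
      Fintype.card F ^ (Module.finrank F M - Module.finrank F (LinearMap.range f)) := by
  have : Module.Finite F M := Module.Finite.of_finite
  have h := LinearMap.finrank_range_add_finrank_ker f
  have h2 : Nat.card (LinearMap.ker f) = Fintype.card F ^ Module.finrank F (LinearMap.ker f) := by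
    have := Fintype.ofFinite (LinearMap.ker f)
    rw [Nat.card_eq_fintype_card]; exact Module.card_eq_pow_finrank
  rw [h2]; congr 1; omega

set_option maxHeartbeats 2000000 in
/-- For every ε > 0 there is a field-size threshold Q beyond which, for any matrices A1, A2
satisfying the rank conditions, at least a (1 − ε) fraction of the pairs (E1, E2) satisfy
rank([A1·E1 | A2·E2]) = k1 + k2. -/
theorem card_pair_fullColumnRank_ge (p l1 l2 k1 k2 : ℕ) :
    ∀ ε : ℝ, 0 < ε → ∃ Q : ℕ, ∀ (F : Type) [Field F] [Fintype F],
      Q ≤ Fintype.card F →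
      ∀ (A1 : Matrix (Fin p) (Fin l1) F) (A2 : Matrix (Fin p) (Fin l2) F),
        k1 ≤ A1.rank → k2 ≤ A2.rank → k1 + k2 ≤ (Matrix.fromCols A1 A2).rank →
        (1 - ε) * (Fintype.card F : ℝ) ^ (l1 * k1 + l2 * k2) ≤
          (Nat.card {E : Matrix (Fin l1) (Fin k1) F × Matrix (Fin l2) (Fin k2) F //
            (Matrix.fromCols (A1 * E.1) (A2 * E.2)).rank = k1 + k2} : ℝ) := by
  intro ε hε
  refine ⟨⌈(3:ℝ) / ε⌉₊ + 2, ?_⟩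
  intro F _ _ hQ A1 A2 hA1 hA2 hA12
  classical
  set q := Fintype.card F with hq
  have hq1 : 1 < q := Fintype.one_lt_card
  set D := l1 * k1 + l2 * k2 with hD
  -- the bilinear evaluation map
  set Φ : ((Fin k1 → F) × (Fin k2 → F)) →
      (Matrix (Fin l1) (Fin k1) F × Matrix (Fin l2) (Fin k2) F) →ₗ[F] (Fin p → F) :=
    fun v => LinearMap.coprod (A1.mulVecLin ∘ₗ mvR l1 k1 v.1) (A2.mulVecLin ∘ₗ mvR l2 k2 v.2)
    with hΦdef
  have hΦ : ∀ v E, Φ v E = (fromCols (A1 * E.1) (A2 * E.2)) *ᵥ (Sum.elim v.1 v.2) := by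
    intro v E
    simp [hΦdef, mvR, Matrix.fromCols_mulVec_sumElim, Matrix.mulVec_mulVec]
  -- dimension of the pair space
  have hfinPair : Module.finrank F
      (Matrix (Fin l1) (Fin k1) F × Matrix (Fin l2) (Fin k2) F) = D := by
    rw [Module.finrank_prod, Module.finrank_matrix, Module.finrank_matrix]
    simp [hD]
  -- ranges
  have hrΦ : ∀ v, LinearMap.range (Φ v) =
      LinearMap.range (A1.mulVecLin ∘ₗ mvR l1 k1 v.1) ⊔
      LinearMap.range (A2.mulVecLin ∘ₗ mvR l2 k2 v.2) :=
    fun v => LinearMap.range_coprod _ _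
  have hcomp1 : ∀ c : Fin k1 → F, c ≠ 0 →
      LinearMap.range (A1.mulVecLin ∘ₗ mvR l1 k1 c) = LinearMap.range A1.mulVecLin :=
    fun c hc => LinearMap.range_comp_of_range_eq_top _ (LinearMap.range_eq_top.mpr (mvR_surj hc))
  have hcomp2 : ∀ c : Fin k2 → F, c ≠ 0 →
      LinearMap.range (A2.mulVecLin ∘ₗ mvR l2 k2 c) = LinearMap.range A2.mulVecLin :=
    fun c hc => LinearMap.range_comp_of_range_eq_top _ (LinearMap.range_eq_top.mpr (mvR_surj hc))
  have hfromCols : LinearMap.range (fromCols A1 A2).mulVecLin =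
      LinearMap.range A1.mulVecLin ⊔ LinearMap.range A2.mulVecLin := by
    apply le_antisymm
    · rintro x ⟨w, rfl⟩
      rw [Matrix.mulVecLin_apply, ← Sum.elim_comp_inl_inr w, Matrix.fromCols_mulVec_sumElim]
      exact Submodule.add_mem_sup ⟨_, rfl⟩ ⟨_, rfl⟩
    · rw [sup_le_iff]
      constructor
      · rintro x ⟨c, rfl⟩
        exact ⟨Sum.elim c 0, by simp [Matrix.fromCols_mulVec_sumElim]⟩
      · rintro x ⟨d, rfl⟩
        exact ⟨Sum.elim 0 d, by simp [Matrix.fromCols_mulVec_sumElim]⟩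
  -- lower bounds on the rank of Φ v
  have hρ1 : ∀ v : (Fin k1 → F) × (Fin k2 → F), v.1 ≠ 0 →
      k1 ≤ Module.finrank F (LinearMap.range (Φ v)) := by
    intro v hv
    refine hA1.trans ?_
    have : A1.rank = Module.finrank F (LinearMap.range (A1.mulVecLin ∘ₗ mvR l1 k1 v.1)) := by
      rw [hcomp1 v.1 hv]; rfl
    rw [this]
    exact Submodule.finrank_mono (by rw [hrΦ v]; exact le_sup_left)
  have hρ2 : ∀ v : (Fin k1 → F) × (Fin k2 → F), v.2 ≠ 0 →
      k2 ≤ Module.finrank F (LinearMap.range (Φ v)) := by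
    intro v hv
    refine hA2.trans ?_
    have : A2.rank = Module.finrank F (LinearMap.range (A2.mulVecLin ∘ₗ mvR l2 k2 v.2)) := by
      rw [hcomp2 v.2 hv]; rfl
    rw [this]
    exact Submodule.finrank_mono (by rw [hrΦ v]; exact le_sup_right)
  have hρ12 : ∀ v : (Fin k1 → F) × (Fin k2 → F), v.1 ≠ 0 → v.2 ≠ 0 →
      k1 + k2 ≤ Module.finrank F (LinearMap.range (Φ v)) := by
    intro v hv1 hv2
    refine hA12.trans ?_
    have : (fromCols A1 A2).rank = Module.finrank F (LinearMap.range (Φ v)) := by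
      rw [hrΦ v, hcomp1 v.1 hv1, hcomp2 v.2 hv2, ← hfromCols]; rfl
    exact this.le
  -- per-vector counting
  have hBv : ∀ v : (Fin k1 → F) × (Fin k2 → F),
      (Finset.univ.filter (fun E : Matrix (Fin l1) (Fin k1) F × Matrix (Fin l2) (Fin k2) F =>
        Φ v E = 0)).card = q ^ (D - Module.finrank F (LinearMap.range (Φ v))) := by
    intro v
    rw [← hfinPair, ← card_ker_eq (Φ v), Nat.card_eq_fintype_card, Fintype.card_subtype]
    congr 1
    apply Finset.filter_congr
    intro E _
    simp [LinearMap.mem_ker]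
  -- the bad set and the incidence set
  set Bad := Finset.univ.filter
    (fun E : Matrix (Fin l1) (Fin k1) F × Matrix (Fin l2) (Fin k2) F =>
      ¬ (fromCols (A1 * E.1) (A2 * E.2)).rank = k1 + k2) with hBadDef
  set T := Finset.univ.filter
    (fun x : (Matrix (Fin l1) (Fin k1) F × Matrix (Fin l2) (Fin k2) F) ×
        ((Fin k1 → F) × (Fin k2 → F)) => x.2 ≠ 0 ∧ Φ x.2 x.1 = 0) with hTDef
  -- lower bound for T.card
  have hT_lower : Bad.card * (q - 1) ≤ T.card := by
    rw [Finset.card_eq_sum_card_fiberwise (s := T) (t := Finset.univ) (f := Prod.fst)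
      (fun x _ => Finset.mem_univ _)]
    have key : ∀ E ∈ Bad, q - 1 ≤ (T.filter (fun x => x.1 = E)).card := by
      intro E hE
      simp only [hBadDef, Finset.mem_filter, Finset.mem_univ, true_and] at hE
      set M := fromCols (A1 * E.1) (A2 * E.2) with hM
      have hker : LinearMap.ker M.mulVecLin ≠ ⊥ := by
        intro h
        have h2 := LinearMap.finrank_range_add_finrank_ker M.mulVecLin
        rw [h, finrank_bot, add_zero] at h2
        have h3 : Module.finrank F ((Fin k1 ⊕ Fin k2) → F) = k1 + k2 := by
          simp [Module.finrank_pi]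
        rw [h3] at h2
        exact hE h2
      obtain ⟨w, hwker, hw0⟩ := (Submodule.ne_bot_iff _).mp hker
      have hwv : M *ᵥ w = 0 := by simpa using LinearMap.mem_ker.mp hwker
      set v : (Fin k1 → F) × (Fin k2 → F) := (w ∘ Sum.inl, w ∘ Sum.inr) with hv
      have helim : Sum.elim v.1 v.2 = w := Sum.elim_comp_inl_inr w
      have hv0 : v ≠ 0 := by
        intro h
        apply hw0
        funext x
        cases x with
        | inl i => exact congrFun (congrArg Prod.fst h) i
        | inr i => exact congrFun (congrArg Prod.snd h) i
      have hcard0 : (Finset.univ.erase (0 : F)).card = q - 1 := by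
        rw [Finset.card_erase_of_mem (Finset.mem_univ _), Finset.card_univ]
      rw [← hcard0]
      apply Finset.card_le_card_of_injOn (fun a : F => (E, a • v))
      · intro a ha
        rw [Finset.mem_coe, Finset.mem_erase] at ha
        simp only [hTDef, Finset.mem_coe, Finset.mem_filter, Finset.mem_univ, true_and]
        refine ⟨⟨smul_ne_zero ha.1 hv0, ?_⟩, trivial⟩
        rw [hΦ]
        have h1 : Sum.elim (a • v).1 (a • v).2 = a • w := by
          rw [← helim]; funext x; cases x <;> rfl
        rw [h1, Matrix.mulVec_smul, ← hM, hwv, smul_zero]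
      · intro a _ b _ hab
        exact smul_left_injective F hv0 (congrArg Prod.snd hab)
    calc Bad.card * (q - 1) = ∑ _E ∈ Bad, (q - 1) := by
          rw [Finset.sum_const, smul_eq_mul]
      _ ≤ ∑ E ∈ Bad, (T.filter (fun x => x.1 = E)).card := Finset.sum_le_sum key
      _ ≤ ∑ E ∈ Finset.univ, (T.filter (fun x => x.1 = E)).card :=
          Finset.sum_le_sum_of_subset (Finset.filter_subset _ _)
  -- upper bound for T.card
  have hk1D : k1 ≤ l1 * k1 := by
    rcases Nat.eq_zero_or_pos k1 with h | h
    · simp [h]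
    · have hl : k1 ≤ l1 := hA1.trans (by simpa using A1.rank_le_card_width)
      exact Nat.le_mul_of_pos_left k1 (by omega)
  have hk2D : k2 ≤ l2 * k2 := by
    rcases Nat.eq_zero_or_pos k2 with h | h
    · simp [h]
    · have hl : k2 ≤ l2 := hA2.trans (by simpa using A2.rank_le_card_width)
      exact Nat.le_mul_of_pos_left k2 (by omega)
  have hkD : k1 + k2 ≤ D := add_le_add hk1D hk2D
  have hT_upper : T.card ≤ 3 * q ^ D := by
    rw [Finset.card_eq_sum_card_fiberwise (s := T)
      (t := Finset.univ.filter (fun v : (Fin k1 → F) × (Fin k2 → F) => v ≠ 0)) (f := Prod.snd)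
      (fun x hx => by
        simp only [hTDef, Finset.mem_coe, Finset.mem_filter, Finset.mem_univ, true_and] at hx ⊢
        exact hx.1)]
    have hterm : ∀ v : (Fin k1 → F) × (Fin k2 → F),
        (T.filter (fun x => x.2 = v)).card ≤
          q ^ (D - Module.finrank F (LinearMap.range (Φ v))) := by
      intro v
      rw [← hBv v]
      apply Finset.card_le_card_of_injOn Prod.fst
      · intro x hx
        simp only [hTDef, Finset.mem_coe, Finset.mem_filter, Finset.mem_univ, true_and] at hx ⊢
        rcases hx with ⟨⟨_, h0⟩, h2⟩
        rw [← h2]; exact h0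
      · intro x hx y hy hxy
        simp only [Finset.coe_filter, Set.mem_setOf_eq] at hx hy
        exact Prod.ext hxy (by rw [hx.2, hy.2])
    set S1 := Finset.univ.filter
      (fun v : (Fin k1 → F) × (Fin k2 → F) => v.1 ≠ 0 ∧ v.2 ≠ 0) with hS1
    set S2 := Finset.univ.filter
      (fun v : (Fin k1 → F) × (Fin k2 → F) => v.1 ≠ 0 ∧ v.2 = 0) with hS2
    set S3 := Finset.univ.filter
      (fun v : (Fin k1 → F) × (Fin k2 → F) => v.1 = 0 ∧ v.2 ≠ 0) with hS3
    have hsub : Finset.univ.filter (fun v : (Fin k1 → F) × (Fin k2 → F) => v ≠ 0) ⊆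
        (S1 ∪ S2) ∪ S3 := by
      intro v hv
      simp only [Finset.mem_filter, Finset.mem_univ, true_and] at hv
      have h0 : ¬(v.1 = 0 ∧ v.2 = 0) := fun h => hv (Prod.ext h.1 h.2)
      simp only [hS1, hS2, hS3, Finset.mem_union, Finset.mem_filter, Finset.mem_univ, true_and]
      tauto
    have hdisj1 : Disjoint (S1 ∪ S2) S3 := by
      rw [Finset.disjoint_left]
      intro v hv hv3
      simp only [hS1, hS2, hS3, Finset.mem_union, Finset.mem_filter, Finset.mem_univ,
        true_and] at hv hv3
      rcases hv with h | h <;> exact h.1 hv3.1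
    have hdisj2 : Disjoint S1 S2 := by
      rw [Finset.disjoint_left]
      intro v hv hv2
      simp only [hS1, hS2, Finset.mem_filter, Finset.mem_univ, true_and] at hv hv2
      exact hv.2 hv2.2
    have hq1' : 1 ≤ q := hq1.le
    have hbound1 : ∑ v ∈ S1, q ^ (D - Module.finrank F (LinearMap.range (Φ v))) ≤ q ^ D := by
      have := Finset.sum_le_card_nsmul S1
        (fun v => q ^ (D - Module.finrank F (LinearMap.range (Φ v)))) (q ^ (D - (k1 + k2)))
        (fun v hv => by
          simp only [hS1, Finset.mem_filter, Finset.mem_univ, true_and] at hv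
          exact Nat.pow_le_pow_right hq1' (Nat.sub_le_sub_left (hρ12 v hv.1 hv.2) D))
      refine this.trans ?_
      rw [smul_eq_mul]
      have hc : S1.card ≤ q ^ (k1 + k2) := by
        refine (Finset.card_le_univ _).trans ?_
        simp [pow_add, hq]
      calc S1.card * q ^ (D - (k1 + k2)) ≤ q ^ (k1 + k2) * q ^ (D - (k1 + k2)) :=
            Nat.mul_le_mul_right _ hc
        _ = q ^ D := by rw [← pow_add, Nat.add_sub_cancel' hkD]
    have hbound2 : ∑ v ∈ S2, q ^ (D - Module.finrank F (LinearMap.range (Φ v))) ≤ q ^ D := by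
      have := Finset.sum_le_card_nsmul S2
        (fun v => q ^ (D - Module.finrank F (LinearMap.range (Φ v)))) (q ^ (D - k1))
        (fun v hv => by
          simp only [hS2, Finset.mem_filter, Finset.mem_univ, true_and] at hv
          exact Nat.pow_le_pow_right hq1' (Nat.sub_le_sub_left (hρ1 v hv.1) D))
      refine this.trans ?_
      rw [smul_eq_mul]
      have hc : S2.card ≤ q ^ k1 := by
        have : S2.card ≤ (Finset.univ : Finset (Fin k1 → F)).card := by
          apply Finset.card_le_card_of_injOn Prod.fst (fun v _ => Finset.mem_univ _)
          intro x hx y hy hxy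
          simp only [hS2, Finset.coe_filter, Set.mem_setOf_eq] at hx hy
          exact Prod.ext hxy (by rw [hx.2.2, hy.2.2])
        simpa using this
      calc S2.card * q ^ (D - k1) ≤ q ^ k1 * q ^ (D - k1) := Nat.mul_le_mul_right _ hc
        _ = q ^ D := by rw [← pow_add, Nat.add_sub_cancel' (hk1D.trans (Nat.le_add_right _ _))]
    have hbound3 : ∑ v ∈ S3, q ^ (D - Module.finrank F (LinearMap.range (Φ v))) ≤ q ^ D := by
      have := Finset.sum_le_card_nsmul S3
        (fun v => q ^ (D - Module.finrank F (LinearMap.range (Φ v)))) (q ^ (D - k2))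
        (fun v hv => by
          simp only [hS3, Finset.mem_filter, Finset.mem_univ, true_and] at hv
          exact Nat.pow_le_pow_right hq1' (Nat.sub_le_sub_left (hρ2 v hv.2) D))
      refine this.trans ?_
      rw [smul_eq_mul]
      have hc : S3.card ≤ q ^ k2 := by
        have : S3.card ≤ (Finset.univ : Finset (Fin k2 → F)).card := by
          apply Finset.card_le_card_of_injOn Prod.snd (fun v _ => Finset.mem_univ _)
          intro x hx y hy hxy
          simp only [hS3, Finset.coe_filter, Set.mem_setOf_eq] at hx hy
          exact Prod.ext (by rw [hx.2.1, hy.2.1]) hxy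
        simpa using this
      calc S3.card * q ^ (D - k2) ≤ q ^ k2 * q ^ (D - k2) := Nat.mul_le_mul_right _ hc
        _ = q ^ D := by rw [← pow_add, Nat.add_sub_cancel' (hk2D.trans (Nat.le_add_left _ _))]
    calc ∑ v ∈ Finset.univ.filter (fun v : (Fin k1 → F) × (Fin k2 → F) => v ≠ 0),
          (T.filter (fun x => x.2 = v)).card
        ≤ ∑ v ∈ Finset.univ.filter (fun v : (Fin k1 → F) × (Fin k2 → F) => v ≠ 0),
            q ^ (D - Module.finrank F (LinearMap.range (Φ v))) :=
          Finset.sum_le_sum (fun v _ => hterm v)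
      _ ≤ ∑ v ∈ (S1 ∪ S2) ∪ S3, q ^ (D - Module.finrank F (LinearMap.range (Φ v))) :=
          Finset.sum_le_sum_of_subset hsub
      _ = (∑ v ∈ S1, q ^ (D - Module.finrank F (LinearMap.range (Φ v))) +
            ∑ v ∈ S2, q ^ (D - Module.finrank F (LinearMap.range (Φ v)))) +
            ∑ v ∈ S3, q ^ (D - Module.finrank F (LinearMap.range (Φ v))) := by
          rw [Finset.sum_union hdisj1, Finset.sum_union hdisj2]
      _ ≤ (q ^ D + q ^ D) + q ^ D := by
          exact add_le_add (add_le_add hbound1 hbound2) hbound3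
      _ = 3 * q ^ D := by ring
  -- the good set
  have hGood : (Nat.card {E : Matrix (Fin l1) (Fin k1) F × Matrix (Fin l2) (Fin k2) F //
      (Matrix.fromCols (A1 * E.1) (A2 * E.2)).rank = k1 + k2} : ℕ) +
      Bad.card = q ^ D := by
    rw [Nat.card_eq_fintype_card, Fintype.card_subtype]
    rw [hBadDef, Finset.card_filter_add_card_filter_not]
    rw [Finset.card_univ]
    have cM1 : Fintype.card (Matrix (Fin l1) (Fin k1) F) = q ^ (l1 * k1) := by
      rw [← Fintype.card_congr (Matrix.of : (Fin l1 → Fin k1 → F) ≃ _),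
        Fintype.card_fun, Fintype.card_fun, Fintype.card_fin, Fintype.card_fin,
        ← pow_mul, Nat.mul_comm]
    have cM2 : Fintype.card (Matrix (Fin l2) (Fin k2) F) = q ^ (l2 * k2) := by
      rw [← Fintype.card_congr (Matrix.of : (Fin l2 → Fin k2 → F) ≃ _),
        Fintype.card_fun, Fintype.card_fun, Fintype.card_fin, Fintype.card_fin,
        ← pow_mul, Nat.mul_comm]
    rw [Fintype.card_prod, cM1, cM2, ← pow_add]
  -- final real arithmetic
  have hqR : (1 : ℝ) < (q : ℝ) := by exact_mod_cast hq1
  have hcast : ((Bad.card : ℝ)) * ((q:ℝ) - 1) ≤ 3 * (q:ℝ)^D := by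
    have := (Nat.cast_le (α := ℝ)).mpr (hT_lower.trans hT_upper)
    push_cast [Nat.cast_sub hq1.le] at this
    exact this
  have hεq : 3 ≤ ε * ((q:ℝ) - 1) := by
    have h1 : (3:ℝ)/ε ≤ (⌈(3:ℝ)/ε⌉₊ : ℝ) := Nat.le_ceil _
    have h2 : ((⌈(3:ℝ)/ε⌉₊ + 2 : ℕ) : ℝ) ≤ (q:ℝ) := by exact_mod_cast hQ
    push_cast at h2
    have h3 : (3:ℝ)/ε ≤ (q:ℝ) - 1 := by linarith
    calc (3:ℝ) = ((3:ℝ)/ε) * ε := by field_simp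
      _ ≤ ((q:ℝ)-1) * ε := mul_le_mul_of_nonneg_right h3 hε.le
      _ = ε * ((q:ℝ)-1) := mul_comm _ _
  have hq1pos : (0:ℝ) < (q:ℝ) - 1 := by linarith
  have hpow : (0:ℝ) ≤ (q:ℝ)^D := by positivity
  have hBadBound : (Bad.card : ℝ) ≤ ε * (q:ℝ)^D := by
    have h3 : (Bad.card : ℝ) * ((q:ℝ)-1) ≤ (ε * (q:ℝ)^D) * ((q:ℝ)-1) := by
      calc (Bad.card : ℝ) * ((q:ℝ)-1) ≤ 3 * (q:ℝ)^D := hcast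
        _ ≤ (ε * ((q:ℝ)-1)) * (q:ℝ)^D := mul_le_mul_of_nonneg_right hεq hpow
        _ = (ε * (q:ℝ)^D) * ((q:ℝ)-1) := by ring
    exact le_of_mul_le_mul_right h3 hq1pos
  have hGoodR : ((Nat.card {E : Matrix (Fin l1) (Fin k1) F × Matrix (Fin l2) (Fin k2) F //
      (Matrix.fromCols (A1 * E.1) (A2 * E.2)).rank = k1 + k2} : ℕ) : ℝ) =
      (q:ℝ)^D - (Bad.card : ℝ) := by
    have := congrArg (fun n : ℕ => (n:ℝ)) hGood
    push_cast at this
    linarith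
  rw [hGoodR]
  have hring : (1 - ε) * (q:ℝ)^D = (q:ℝ)^D - ε * (q:ℝ)^D := by ring
  rw [hring]
  linarith
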